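/- Let A be a bounded operator on a complex Hilbert space H that is quasi *-paranormal, i.e., ‖A*Ax‖² ≤ ‖A³x‖·‖Ax‖ for all x ∈ H. Then for every integer n ≥ 1, ‖Aⁿ‖ = ‖A‖ⁿ (i.e., A is normaloid). -/

import Mathlib

open ContinuousLinearMap

private lemma qsp_cube_le {H : Type*} [NormedAddCommGroup H] [InnerProductSpace ℂ H]
    [CompleteSpace H] (T : H →L[ℂ] H) {C : ℝ} (hC : 0 ≤ C)
    (h : ∀ x : H, ‖T x‖ ^ 3 ≤ C * ‖x‖ ^ 3) : ‖T‖ ^ 3 ≤ C := by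
  have hcube : (C ^ ((1:ℝ)/3)) ^ 3 = C := by
    rw [← Real.rpow_natCast (C ^ ((1:ℝ)/3)) 3, ← Real.rpow_mul hC]
    norm_num
  have hT : ‖T‖ ≤ C ^ ((1:ℝ)/3) := by
    refine T.opNorm_le_bound (Real.rpow_nonneg hC _) (fun x => ?_)
    have h3 : ‖T x‖ ^ 3 ≤ (C ^ ((1:ℝ)/3) * ‖x‖) ^ 3 := by
      rw [mul_pow, hcube]; exact h x
    exact le_of_pow_le_pow_left₀ (by norm_num)
      (mul_nonneg (Real.rpow_nonneg hC _) (norm_nonneg _)) h3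
  calc ‖T‖ ^ 3 ≤ (C ^ ((1:ℝ)/3)) ^ 3 := by
        exact pow_le_pow_left₀ (norm_nonneg _) hT 3
    _ = C := hcube

theorem quasi_star_paranormal_normaloid
    {H : Type*} [NormedAddCommGroup H] [InnerProductSpace ℂ H] [CompleteSpace H]
    (A : H →L[ℂ] H)
    (hqsp : ∀ x : H, ‖(ContinuousLinearMap.adjoint A) (A x)‖ ^ 2 ≤ ‖(A ^ 3) x‖ * ‖A x‖) :
    ∀ n : ℕ, 1 ≤ n → ‖A ^ n‖ = ‖A‖ ^ n := by
  -- upper bound, valid always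
  have hub : ∀ k : ℕ, ‖A ^ k‖ ≤ ‖A‖ ^ k := by
    intro k
    induction k with
    | zero => rw [pow_zero, pow_zero]; exact norm_id_le (𝕜 := ℂ) (E := H)
    | succ k ih =>
        calc ‖A ^ (k+1)‖ = ‖A ^ k * A‖ := by rw [pow_succ]
          _ ≤ ‖A ^ k‖ * ‖A‖ := norm_mul_le _ _
          _ ≤ ‖A‖ ^ k * ‖A‖ := by
              exact mul_le_mul_of_nonneg_right ih (norm_nonneg _)
          _ = ‖A‖ ^ (k+1) := (pow_succ _ _).symm
  rcases eq_or_lt_of_le (norm_nonneg A) with hA0 | hA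
  · -- A = 0
    intro n hn
    have hA : A = 0 := by
      simpa using (norm_eq_zero.mp hA0.symm)
    subst hA
    rw [zero_pow (by omega : n ≠ 0), norm_zero, zero_pow (by omega : n ≠ 0)]
  -- key pointwise inequality
  have key : ∀ x : H, ‖A x‖ ^ 3 ≤ ‖(A ^ 3) x‖ * ‖x‖ ^ 2 := by
    intro x
    have h1 : (‖A x‖ : ℝ) ^ 2 ≤ ‖(adjoint A) (A x)‖ * ‖x‖ := by
      have h1' : (‖A x‖ : ℝ) ^ 2 = RCLike.re (inner (𝕜 := ℂ) ((adjoint A) (A x)) x) := by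
        rw [adjoint_inner_left, inner_self_eq_norm_sq]
      rw [h1']
      calc RCLike.re (inner (𝕜 := ℂ) ((adjoint A) (A x)) x)
          ≤ ‖(inner (𝕜 := ℂ) ((adjoint A) (A x)) x)‖ := RCLike.re_le_norm _
        _ ≤ ‖(adjoint A) (A x)‖ * ‖x‖ := norm_inner_le_norm _ _
    have h2 := hqsp x
    rcases eq_or_lt_of_le (norm_nonneg (A x)) with h0 | h0
    · have : ‖A x‖ = 0 := h0.symm
      rw [this]
      norm_num
      positivity
    · -- ‖Ax‖^4 ≤ ‖A³x‖ ‖Ax‖ ‖x‖², then divide by ‖Ax‖ > 0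
      nlinarith [norm_nonneg ((adjoint A) (A x)), norm_nonneg x, norm_nonneg ((A^3) x),
        sq_nonneg (‖(adjoint A) (A x)‖ - ‖A x‖ * ‖x‖)]
  -- shifted pointwise inequality
  have key2 : ∀ (k : ℕ) (x : H),
      ‖(A ^ (k+1)) x‖ ^ 3 ≤ ‖(A ^ (k+3)) x‖ * ‖(A ^ k) x‖ ^ 2 := by
    intro k x
    have e1 : (A ^ (k+1)) x = A ((A ^ k) x) := by
      rw [pow_succ']; rfl
    have e2 : (A ^ (k+3)) x = (A ^ 3) ((A ^ k) x) := by
      have : A ^ (k+3) = A ^ 3 * A ^ k := by rw [← pow_add]; ring_nf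
      rw [this]; rfl
    rw [e1, e2]
    exact key _
  -- operator-norm inequality
  have keyop : ∀ k : ℕ, ‖A ^ (k+1)‖ ^ 3 ≤ ‖A ^ (k+3)‖ * ‖A ^ k‖ ^ 2 := by
    intro k
    refine qsp_cube_le _ (by positivity) (fun x => ?_)
    calc ‖(A ^ (k+1)) x‖ ^ 3 ≤ ‖(A ^ (k+3)) x‖ * ‖(A ^ k) x‖ ^ 2 := key2 k x
      _ ≤ (‖A ^ (k+3)‖ * ‖x‖) * (‖A ^ k‖ * ‖x‖) ^ 2 := by
          have h1 := (A ^ (k+3)).le_opNorm x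
          have h2 := (A ^ k).le_opNorm x
          have h2' : ‖(A ^ k) x‖ ^ 2 ≤ (‖A ^ k‖ * ‖x‖) ^ 2 :=
            pow_le_pow_left₀ (norm_nonneg _) h2 2
          exact mul_le_mul h1 h2' (by positivity) (by positivity)
      _ = ‖A ^ (k+3)‖ * ‖A ^ k‖ ^ 2 * ‖x‖ ^ 3 := by ring
  -- odd lower bound
  have hodd : ∀ m : ℕ, ‖A‖ ^ (2*m+1) ≤ ‖A ^ (2*m+1)‖ := by
    intro m
    induction m with
    | zero => simp
    | succ m ih =>
        have hk := keyop (2*m)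
        have hub' : ‖A ^ (2*m)‖ ^ 2 ≤ (‖A‖ ^ (2*m)) ^ 2 :=
          pow_le_pow_left₀ (norm_nonneg _) (hub (2*m)) 2
        have h1 : (‖A‖ ^ (2*m+1)) ^ 3 ≤ ‖A ^ (2*m+1)‖ ^ 3 :=
          pow_le_pow_left₀ (by positivity) ih 3
        have h2 : (‖A‖ ^ (2*m+1)) ^ 3 ≤ ‖A ^ (2*m+3)‖ * (‖A‖ ^ (2*m)) ^ 2 := by
          calc (‖A‖ ^ (2*m+1)) ^ 3 ≤ ‖A ^ (2*m+1)‖ ^ 3 := h1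
            _ ≤ ‖A ^ (2*m+3)‖ * ‖A ^ (2*m)‖ ^ 2 := hk
            _ ≤ ‖A ^ (2*m+3)‖ * (‖A‖ ^ (2*m)) ^ 2 :=
                mul_le_mul_of_nonneg_left hub' (norm_nonneg _)
        have hpos : (0:ℝ) < (‖A‖ ^ (2*m)) ^ 2 := by positivity
        have h3 : ‖A‖ ^ (2*m+3) * (‖A‖ ^ (2*m)) ^ 2 ≤ ‖A ^ (2*m+3)‖ * (‖A‖ ^ (2*m)) ^ 2 := by
          calc ‖A‖ ^ (2*m+3) * (‖A‖ ^ (2*m)) ^ 2 = (‖A‖ ^ (2*m+1)) ^ 3 := by ring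
            _ ≤ _ := h2
        have := le_of_mul_le_mul_right h3 hpos
        have hgoal : 2*(m+1)+1 = 2*m+3 := by ring
        rw [hgoal]
        exact this
  -- even lower bound
  have heven : ∀ m : ℕ, ‖A‖ ^ (2*m) ≤ ‖A ^ (2*m)‖ := by
    intro m
    have h1 : ‖A‖ ^ (2*m+1) ≤ ‖A ^ (2*m)‖ * ‖A‖ := by
      calc ‖A‖ ^ (2*m+1) ≤ ‖A ^ (2*m+1)‖ := hodd m
        _ = ‖A ^ (2*m) * A‖ := by rw [pow_succ]
        _ ≤ ‖A ^ (2*m)‖ * ‖A‖ := norm_mul_le _ _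
    have h2 : ‖A‖ ^ (2*m) * ‖A‖ ≤ ‖A ^ (2*m)‖ * ‖A‖ := by
      calc ‖A‖ ^ (2*m) * ‖A‖ = ‖A‖ ^ (2*m+1) := (pow_succ _ _).symm
        _ ≤ _ := h1
    exact le_of_mul_le_mul_right h2 hA
  intro n _
  refine le_antisymm (hub n) ?_
  rcases Nat.even_or_odd n with ⟨m, hm⟩ | ⟨m, hm⟩
  · subst hm
    simpa [two_mul] using heven m
  · subst hm
    exact hodd m
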